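/- Let S be a nonempty set and ℱ a linearly independent family of real-valued functions on S. Let f₁,…,f_D and f̂₁,…,f̂_D be members of ℱ, each list pairwise distinct. Let Z, Ẑ : {1,…,D}×{1,…,T} → ℝ satisfy the non-degeneracy condition that every row of Z and every row of Ẑ is not identically zero in t. For each ℓ ∈ S and t, let p_{ℓ,t} : ℝ → ℝ be a nonnegative integrable probability density whose Fourier transform vanishes only on a Lebesgue-null set. If for every ℓ ∈ S, t ∈ {1,…,T} and x ∈ ℝ, p_{ℓ,t}(x − Σ_j f_j(ℓ) Z_{j,t}) = p_{ℓ,t}(x − Σ_j f̂_j(ℓ) Ẑ_{j,t}), then there exists a permutation σ of {1,…,D} with f̂_j = f_{σ(j)} and Ẑ_{j,t} = Z_{σ(j),t} for all j, t. -/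
import Mathlib


open MeasureTheory

open MeasureTheory Filter
open scoped Classical
lemma shift_eq_of_density_eq (p : ℝ → ℝ) (hpnn : ∀ x, 0 ≤ p x)
    (hpint : Integrable p) (hprob : ∫ x, p x = 1) (a b : ℝ)
    (h : ∀ x, p (x - a) = p (x - b)) : a = b := by
  by_contra hab
  have hper : Function.Periodic p (b - a) := by
    intro x
    have h2 := h (x + b)
    simpa [add_sub_assoc] using h2
  set c : ℝ := |b - a| with hc
  have hc0 : 0 < c := abs_pos.mpr (sub_ne_zero.mpr (Ne.symm hab))
  have hperc : Function.Periodic p c := by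
    rcases abs_choice (b - a) with h1 | h1
    · rwa [hc, h1]
    · rw [hc, h1]; exact hper.neg
  have hint : ∀ t₁ t₂ : ℝ, IntervalIntegrable p volume t₁ t₂ :=
    fun t₁ t₂ => hpint.intervalIntegrable
  set k : ℝ := ∫ x in (0:ℝ)..c, p x with hk
  have key : ∀ n : ℕ, ∫ x in (-(n:ℝ)*c)..((n:ℝ)*c), p x = (2*(n:ℝ)) * k := by
    intro n
    have h2 : ((n:ℝ)*c) = (-(n:ℝ)*c) + ((2*n : ℤ) : ℝ) * c := by push_cast; ring
    have h3 := hperc.intervalIntegral_add_zsmul_eq (2*n) (-(n:ℝ)*c) hint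
    rw [zsmul_eq_mul] at h3
    rw [h2, h3]
    have h4 := hperc.intervalIntegral_add_eq (-(n:ℝ)*c) 0
    rw [zsmul_eq_mul, h4, zero_add, ← hk]
    push_cast; ring
  have hmul : Tendsto (fun n : ℕ => (n:ℝ)*c) atTop atTop :=
    Tendsto.atTop_mul_const hc0 tendsto_natCast_atTop_atTop
  have hten : Tendsto (fun n : ℕ => (2*(n:ℝ)) * k) atTop (nhds 1) := by
    have := intervalIntegral_tendsto_integral (μ := volume) (f := p)
      (a := fun n : ℕ => -(n:ℝ)*c) (b := fun n : ℕ => (n:ℝ)*c) hpint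
      (by simpa only [neg_mul] using tendsto_neg_atBot_iff.mpr hmul) hmul
    rw [hprob] at this
    exact this.congr key
  have hk0 : 0 ≤ k := intervalIntegral.integral_nonneg hc0.le (fun x _ => hpnn x)
  rcases eq_or_lt_of_le hk0 with hk0' | hk0'
  · have : Tendsto (fun _ : ℕ => (0:ℝ)) atTop (nhds 1) := by
      refine hten.congr (fun n => ?_)
      rw [← hk0']; ring
    exact one_ne_zero (tendsto_nhds_unique this tendsto_const_nhds)
  · have : Tendsto (fun n : ℕ => (2*(n:ℝ)) * k) atTop atTop := by
      refine Tendsto.atTop_mul_const hk0' ?_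
      exact Tendsto.const_mul_atTop (by norm_num) tendsto_natCast_atTop_atTop
    exact not_tendsto_nhds_of_tendsto_atTop this 1 hten
lemma coeff_match {S : Type*} (ℱ : Set (S → ℝ))
    (hli : LinearIndependent ℝ (fun φ : ℱ => (φ : S → ℝ)))
    (D : ℕ) (f fh : Fin D → S → ℝ)
    (hf : ∀ j, f j ∈ ℱ) (hfh : ∀ j, fh j ∈ ℱ)
    (hfinj : Function.Injective f) (hfhinj : Function.Injective fh)
    (u v : Fin D → ℝ)
    (hsum : ∀ ℓ, ∑ j, f j ℓ * u j = ∑ j, fh j ℓ * v j) :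
    ∀ j, v j = ∑ j' ∈ Finset.univ.filter (fun j' => f j' = fh j), u j' := by
  classical
  set F : Fin D → ℱ := fun j => ⟨f j, hf j⟩ with hF
  set Fh : Fin D → ℱ := fun j => ⟨fh j, hfh j⟩ with hFh
  have hFinj : Function.Injective F := fun a b hab => hfinj (congrArg Subtype.val hab)
  have hFhinj : Function.Injective Fh := fun a b hab => hfhinj (congrArg Subtype.val hab)
  set s : Finset ℱ := Finset.univ.image F ∪ Finset.univ.image Fh with hs
  set g : ℱ → ℝ := fun φ =>
    (∑ j ∈ Finset.univ.filter (fun j => F j = φ), u j)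
      - (∑ j ∈ Finset.univ.filter (fun j => Fh j = φ), v j) with hg
  have hlin : ∑ φ ∈ s, g φ • (φ : S → ℝ) = 0 := by
    have e1 : ∑ φ ∈ s, (∑ j ∈ Finset.univ.filter (fun j => F j = φ), u j) • (φ : S → ℝ)
        = ∑ j, u j • f j := by
      rw [← Finset.sum_fiberwise_of_maps_to (g := F)
        (fun j _ => Finset.mem_union_left _ (Finset.mem_image_of_mem F (Finset.mem_univ j)))
        (fun j => u j • f j)]
      refine Finset.sum_congr rfl (fun φ _ => ?_)
      rw [Finset.sum_smul]
      refine Finset.sum_congr rfl (fun j hj => ?_)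
      have : F j = φ := (Finset.mem_filter.mp hj).2
      rw [← this]
    have e2 : ∑ φ ∈ s, (∑ j ∈ Finset.univ.filter (fun j => Fh j = φ), v j) • (φ : S → ℝ)
        = ∑ j, v j • fh j := by
      rw [← Finset.sum_fiberwise_of_maps_to (g := Fh)
        (fun j _ => Finset.mem_union_right _ (Finset.mem_image_of_mem Fh (Finset.mem_univ j)))
        (fun j => v j • fh j)]
      refine Finset.sum_congr rfl (fun φ _ => ?_)
      rw [Finset.sum_smul]
      refine Finset.sum_congr rfl (fun j hj => ?_)
      have : Fh j = φ := (Finset.mem_filter.mp hj).2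
      rw [← this]
    simp only [hg, sub_smul, Finset.sum_sub_distrib, e1, e2]
    ext ℓ
    simpa [mul_comm, sub_eq_zero] using hsum ℓ
  have hcoef := linearIndependent_iff'.mp hli s g hlin
  intro j
  have hj : Fh j ∈ s := Finset.mem_union_right _ (Finset.mem_image_of_mem Fh (Finset.mem_univ j))
  have h0 := hcoef (Fh j) hj
  simp only [hg] at h0
  have hfilt : Finset.univ.filter (fun j' => Fh j' = Fh j) = {j} := by
    ext j'
    simp [hFhinj.eq_iff]
  rw [hfilt, Finset.sum_singleton, sub_eq_zero] at h0
  rw [← h0]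
  refine Finset.sum_congr ?_ (fun _ _ => rfl)
  ext j'
  simp only [Finset.mem_filter, Finset.mem_univ, true_and]
  constructor
  · intro h'; exact congrArg Subtype.val h'
  · intro h'; exact Subtype.ext h'
/-- **Theorem 1 (Identifiability of Linear SFPs).** Suppose the spatial factors
`f j`, `fh j` are pairwise-distinct members of a linearly independent family `ℱ`
of real-valued functions on `S`, the latent series `Z`, `Zh` are non-degenerate,
and for each location `ℓ` and time `t` the additive noise density `p ℓ t` is a
nonnegative integrable probability density whose characteristic function vanishes
only on a Lebesgue-null set. If the conditional observation densities of the two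
linear spatial factor processes agree everywhere, then the spatial factors and
latent time series coincide up to a permutation. -/
theorem linear_sfp_identifiability_noisy {S : Type*} [Nonempty S]
    (ℱ : Set (S → ℝ))
    (hli : LinearIndependent ℝ (fun φ : ℱ => (φ : S → ℝ)))
    (D T : ℕ) (f fh : Fin D → S → ℝ)
    (hf : ∀ j, f j ∈ ℱ) (hfh : ∀ j, fh j ∈ ℱ)
    (hfinj : Function.Injective f) (hfhinj : Function.Injective fh)
    (Z Zh : Fin D → Fin T → ℝ)
    (hZ : ∀ d, ∃ t, Z d t ≠ 0) (hZh : ∀ d, ∃ t, Zh d t ≠ 0)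
    (p : S → Fin T → ℝ → ℝ)
    (hpnn : ∀ ℓ t x, 0 ≤ p ℓ t x)
    (hpint : ∀ ℓ t, Integrable (p ℓ t))
    (hprob : ∀ ℓ t, ∫ x, p ℓ t x = 1)
    (hzero : ∀ ℓ t,
      volume {s : ℝ | ∫ x : ℝ, Complex.exp (Complex.I * (s : ℂ) * (x : ℂ)) * (p ℓ t x : ℂ) = 0}
        = 0)
    (heq : ∀ (ℓ : S) (t : Fin T) (x : ℝ),
      p ℓ t (x - ∑ j, f j ℓ * Z j t) = p ℓ t (x - ∑ j, fh j ℓ * Zh j t)) :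
    ∃ σ : Equiv.Perm (Fin D), ∀ j, fh j = f (σ j) ∧ ∀ t, Zh j t = Z (σ j) t := by
  have hsum : ∀ (t : Fin T) (ℓ : S), ∑ j, f j ℓ * Z j t = ∑ j, fh j ℓ * Zh j t :=
    fun t ℓ => shift_eq_of_density_eq (p ℓ t) (hpnn ℓ t) (hpint ℓ t) (hprob ℓ t) _ _ (heq ℓ t)
  have hmatch : ∀ (t : Fin T) (j : Fin D),
      Zh j t = ∑ j' ∈ Finset.univ.filter (fun j' => f j' = fh j), Z j' t :=
    fun t => coeff_match ℱ hli D f fh hf hfh hfinj hfhinj (fun j => Z j t) (fun j => Zh j t)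
      (hsum t)
  have hex : ∀ j, ∃ j', f j' = fh j := by
    intro j
    by_contra hno
    push_neg at hno
    obtain ⟨t, ht⟩ := hZh j
    apply ht
    rw [hmatch t j]
    have : Finset.univ.filter (fun j' => f j' = fh j) = ∅ := by
      ext j'; simp [hno j']
    rw [this, Finset.sum_empty]
  choose σ₀ hσ₀ using hex
  have hσinj : Function.Injective σ₀ := by
    intro j₁ j₂ hj
    apply hfhinj
    rw [← hσ₀ j₁, ← hσ₀ j₂, hj]
  refine ⟨Equiv.ofBijective σ₀ (Finite.injective_iff_bijective.mp hσinj), fun j => ?_⟩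
  refine ⟨(hσ₀ j).symm, fun t => ?_⟩
  rw [hmatch t j]
  have hfilt : Finset.univ.filter (fun j' => f j' = fh j) = {σ₀ j} := by
    ext j'
    simp only [Finset.mem_filter, Finset.mem_univ, true_and, Finset.mem_singleton]
    constructor
    · intro h'; exact hfinj (h'.trans (hσ₀ j).symm)
    · intro h'; rw [h']; exact hσ₀ j
  rw [hfilt, Finset.sum_singleton]
  rfl
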